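/- Let k and t be positive integers, let G₁, …, G_t be simple graphs on pairwise disjoint vertex sets V₁, …, V_t, fix an index i ∈ {1, …, t} and distinct vertices a, b ∈ V_i, and set d = deg_{G_i}(a) + deg_{G_i}(b). Assume d ≥ 1, k ≥ d + 1, and |V_i ∖ {a, b}| ≥ d − 1, and let N ⊆ V_i ∖ {a, b} be any set with |N| = d − 1. Let (I_S, I_T) be any partition of {1, …, t} ∖ {i}, and let S, T and {c} be new pairwise disjoint vertex sets, disjoint from all V_j, with |S| = |T| = k. Define the simple graph H on vertex set V₁ ∪ ⋯ ∪ V_t ∪ S ∪ T ∪ {c} whose edges are: all edges of each G_j; all pairs of distinct vertices within S; all pairs of distinct vertices within T; all pairs between S and {a, b}; all pairs between S and V_j for each j ∈ I_S; all pairs between T and V_i ∖ {a, b}; all pairs between T and V_j for each j ∈ I_T; and all pairs between c and the vertices of N. Then the minimum cut value of H equals d − 2 if {a, b} is an edge of G_i, and equals d − 1 otherwise. -/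
import Mathlib


open scoped Classical

/-- The set of edges of `G` crossing the cut `(A, V \ A)`. -/
def cutEdges {V : Type*} (G : SimpleGraph V) (A : Set V) : Set (Sym2 V) :=
  {e | e ∈ G.edgeSet ∧ ∃ u v, u ∈ A ∧ v ∉ A ∧ e = s(u, v)}

/-- The graph `H⁺` of the Index lower-bound reduction, on vertex set
`(Σ j, V j) ⊕ (S ⊕ (T ⊕ {c}))` with `S = T = Fin k`: all edges of each `G j`;
cliques on `S` and `T`; all edges between `S` and `{a, b}`; all edges between `S` and
`V j` for `j ∈ IS`; all edges between `T` and `V i ∖ {a, b}`; all edges between `T` and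
`V j` for `j ∉ IS`, `j ≠ i`; and all edges between `c` and the vertices of `N`. -/
def bigGraph {t : ℕ} (V : Fin t → Type*) (G : ∀ j, SimpleGraph (V j)) (k : ℕ)
    (i : Fin t) (a b : V i) (N : Set (V i)) (IS : Set (Fin t)) :
    SimpleGraph ((Σ j, V j) ⊕ (Fin k ⊕ (Fin k ⊕ Unit))) :=
  SimpleGraph.fromRel (fun x y =>
    (∃ (j : Fin t) (u v : V j), (G j).Adj u v ∧
        x = Sum.inl ⟨j, u⟩ ∧ y = Sum.inl ⟨j, v⟩) ∨
    (∃ s s' : Fin k, x = Sum.inr (Sum.inl s) ∧ y = Sum.inr (Sum.inl s')) ∨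
    (∃ s s' : Fin k, x = Sum.inr (Sum.inr (Sum.inl s)) ∧
        y = Sum.inr (Sum.inr (Sum.inl s'))) ∨
    (∃ s : Fin k, x = Sum.inr (Sum.inl s) ∧
        (y = Sum.inl ⟨i, a⟩ ∨ y = Sum.inl ⟨i, b⟩)) ∨
    (∃ (s : Fin k) (j : Fin t) (u : V j), j ∈ IS ∧
        x = Sum.inr (Sum.inl s) ∧ y = Sum.inl ⟨j, u⟩) ∨
    (∃ (s : Fin k) (u : V i), u ≠ a ∧ u ≠ b ∧
        x = Sum.inr (Sum.inr (Sum.inl s)) ∧ y = Sum.inl ⟨i, u⟩) ∨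
    (∃ (s : Fin k) (j : Fin t) (u : V j), j ≠ i ∧ j ∉ IS ∧
        x = Sum.inr (Sum.inr (Sum.inl s)) ∧ y = Sum.inl ⟨j, u⟩) ∨
    (∃ u : V i, u ∈ N ∧ x = Sum.inr (Sum.inr (Sum.inr ())) ∧ y = Sum.inl ⟨i, u⟩))

lemma cutEdges_compl {V : Type*} (G : SimpleGraph V) (A : Set V) :
    cutEdges G Aᶜ = cutEdges G A := by
  ext e
  simp only [cutEdges, Set.mem_setOf_eq, Set.mem_compl_iff, not_not]
  constructor <;> rintro ⟨he, u, v, hu, hv, rfl⟩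
  · exact ⟨he, v, u, hv, hu, Sym2.eq_swap.symm⟩
  · exact ⟨he, v, u, hv, hu, Sym2.eq_swap.symm⟩

lemma mem_cutEdges {V : Type*} {G : SimpleGraph V} {A : Set V} {u v : V}
    (h : G.Adj u v) (hu : u ∈ A) (hv : v ∉ A) : s(u, v) ∈ cutEdges G A :=
  ⟨G.mem_edgeSet.2 h, u, v, hu, hv, rfl⟩

lemma clique_cut_lb {V : Type*} [Finite V] (G : SimpleGraph V) (A : Set V) {k : ℕ}
    (f : Fin k → V) (hf : Function.Injective f)
    (hadj : ∀ s s', s ≠ s' → G.Adj (f s) (f s'))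
    {s₀ s₁ : Fin k} (h0 : f s₀ ∈ A) (h1 : f s₁ ∉ A) :
    k - 1 ≤ (cutEdges G A).ncard := by
  have hc : (({s₁}ᶜ : Set (Fin k))).ncard = k - 1 := by
    have h := Set.ncard_add_ncard_compl ({s₁} : Set (Fin k))
    simp only [Set.ncard_singleton, Nat.card_eq_fintype_card, Fintype.card_fin] at h
    omega
  rw [← hc]
  apply Set.ncard_le_ncard_of_injOn
    (fun s => if f s ∈ A then s(f s, f s₁) else s(f s, f s₀))
  · intro s hs
    simp only [Set.mem_compl_iff, Set.mem_singleton_iff] at hs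
    by_cases h : f s ∈ A <;> simp only [h, if_true, if_false, if_neg, if_pos]
    · exact mem_cutEdges (hadj s s₁ hs) h h1
    · have hss : s ≠ s₀ := fun e => h (e ▸ h0)
      have := mem_cutEdges (hadj s₀ s (Ne.symm hss)) h0 h
      rwa [Sym2.eq_swap] at this
  · intro x hx y hy hxy
    simp only [Set.mem_compl_iff, Set.mem_singleton_iff] at hx hy
    by_cases h1x : f x ∈ A <;> by_cases h1y : f y ∈ A <;>
      simp only [h1x, h1y, if_true, if_false] at hxy <;>
      rw [Sym2.eq_iff] at hxy
    · rcases hxy with ⟨h, -⟩ | ⟨h, h'⟩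
      · exact hf h
      · exact absurd (hf h').symm hy
    · rcases hxy with ⟨-, h'⟩ | ⟨-, h'⟩
      · exact absurd (h'.symm ▸ h0) h1
      · exact absurd (hf h').symm hy
    · rcases hxy with ⟨-, h'⟩ | ⟨h, -⟩
      · exact absurd (h' ▸ h0) h1
      · exact absurd (hf h) hx
    · rcases hxy with ⟨h, -⟩ | ⟨-, h'⟩
      · exact hf h
      · exact absurd (h' ▸ h0) h1y

lemma star_cut_lb {V : Type*} [Finite V] (G : SimpleGraph V) (A : Set V) {k : ℕ}
    (f : Fin k → V) (hf : Function.Injective f) (v : V)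
    (hadj : ∀ s, G.Adj v (f s)) (hv : v ∈ A) (hA : ∀ s, f s ∉ A) :
    k ≤ (cutEdges G A).ncard := by
  have : k = ((Set.univ : Set (Fin k))).ncard := by
    simp [Set.ncard_univ]
  rw [this]
  apply Set.ncard_le_ncard_of_injOn (fun s => s(v, f s))
  · exact fun s _ => mem_cutEdges (hadj s) hv (hA s)
  · intro x _ y _ hxy
    rw [Sym2.eq_iff] at hxy
    rcases hxy with ⟨-, h⟩ | ⟨h, h'⟩
    · exact hf h
    · exact absurd h (hadj y).ne

lemma star_cut_lb' {V : Type*} [Finite V] (G : SimpleGraph V) (A : Set V) {k : ℕ}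
    (f : Fin k → V) (hf : Function.Injective f) (v : V)
    (hadj : ∀ s, G.Adj v (f s)) (hv : v ∉ A) (hA : ∀ s, f s ∈ A) :
    k ≤ (cutEdges G A).ncard := by
  rw [← cutEdges_compl]
  exact star_cut_lb G Aᶜ f hf v hadj hv (fun s => by simpa using hA s)
section BigHelpers

variable {t k : ℕ} {V : Fin t → Type*} {G : ∀ j, SimpleGraph (V j)}
  {i : Fin t} {a b : V i} {N : Set (V i)} {IS : Set (Fin t)}

def bigA (V : Fin t → Type*) (k : ℕ) (i : Fin t) (a b : V i) (IS : Set (Fin t)) :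
    Set ((Σ j, V j) ⊕ (Fin k ⊕ (Fin k ⊕ Unit))) :=
  {x | (∃ s : Fin k, x = Sum.inr (Sum.inl s)) ∨ x = Sum.inl ⟨i, a⟩ ∨ x = Sum.inl ⟨i, b⟩ ∨
    ∃ j ∈ IS, ∃ u : V j, x = Sum.inl ⟨j, u⟩}

lemma mem_bigA_S (s : Fin k) :
    (Sum.inr (Sum.inl s) : (Σ j, V j) ⊕ (Fin k ⊕ (Fin k ⊕ Unit))) ∈ bigA V k i a b IS :=
  Or.inl ⟨s, rfl⟩

lemma not_mem_bigA_T (s : Fin k) :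
    (Sum.inr (Sum.inr (Sum.inl s)) : (Σ j, V j) ⊕ (Fin k ⊕ (Fin k ⊕ Unit))) ∉ bigA V k i a b IS := by
  simp [bigA]

lemma not_mem_bigA_c :
    (Sum.inr (Sum.inr (Sum.inr ())) : (Σ j, V j) ⊕ (Fin k ⊕ (Fin k ⊕ Unit))) ∉ bigA V k i a b IS := by
  simp [bigA]

lemma mem_bigA_Gi (hIS : i ∉ IS) (u : V i) :
    (Sum.inl ⟨i, u⟩ : (Σ j, V j) ⊕ (Fin k ⊕ (Fin k ⊕ Unit))) ∈ bigA V k i a b IS ↔ u = a ∨ u = b := by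
  simp only [bigA, Set.mem_setOf_eq, Sum.inl.injEq, Sigma.mk.inj_iff, heq_eq_eq, true_and,
    reduceCtorEq, exists_false, false_or]
  constructor
  · rintro (h | h | ⟨j, hj', w, rfl, -⟩)
    · exact Or.inl h
    · exact Or.inr h
    · exact absurd hj' hIS
  · tauto
  
lemma mem_bigA_Gj {j : Fin t} (hj : j ≠ i) (u : V j) :
    (Sum.inl ⟨j, u⟩ : (Σ j, V j) ⊕ (Fin k ⊕ (Fin k ⊕ Unit))) ∈ bigA V k i a b IS ↔ j ∈ IS := by
  simp only [bigA, Set.mem_setOf_eq, Sum.inl.injEq, Sigma.mk.inj_iff,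
    reduceCtorEq, exists_false, false_or]
  constructor
  · rintro (⟨h, -⟩ | ⟨h, -⟩ | ⟨j', hj', w, rfl, -⟩)
    · exact absurd h hj
    · exact absurd h hj
    · exact hj'
  · exact fun h => Or.inr (Or.inr ⟨j, h, u, rfl, HEq.rfl⟩)

lemma adj_G {j : Fin t} {u v : V j} (h : (G j).Adj u v) :
    (bigGraph V G k i a b N IS).Adj (Sum.inl ⟨j, u⟩) (Sum.inl ⟨j, v⟩) := by
  rw [bigGraph, SimpleGraph.fromRel_adj]
  exact ⟨by simp [h.ne], Or.inl (Or.inl ⟨j, u, v, h, rfl, rfl⟩)⟩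

lemma adj_S_S {s s' : Fin k} (h : s ≠ s') :
    (bigGraph V G k i a b N IS).Adj (Sum.inr (Sum.inl s)) (Sum.inr (Sum.inl s')) := by
  rw [bigGraph, SimpleGraph.fromRel_adj]
  exact ⟨by simp [h], Or.inl (Or.inr (Or.inl ⟨s, s', rfl, rfl⟩))⟩

lemma adj_T_T {s s' : Fin k} (h : s ≠ s') :
    (bigGraph V G k i a b N IS).Adj (Sum.inr (Sum.inr (Sum.inl s))) (Sum.inr (Sum.inr (Sum.inl s'))) := by
  rw [bigGraph, SimpleGraph.fromRel_adj]
  exact ⟨by simp [h], Or.inl (Or.inr (Or.inr (Or.inl ⟨s, s', rfl, rfl⟩)))⟩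

lemma adj_S_a (s : Fin k) :
    (bigGraph V G k i a b N IS).Adj (Sum.inr (Sum.inl s)) (Sum.inl ⟨i, a⟩) := by
  rw [bigGraph, SimpleGraph.fromRel_adj]
  exact ⟨by simp, Or.inl (Or.inr (Or.inr (Or.inr (Or.inl ⟨s, rfl, Or.inl rfl⟩))))⟩

lemma adj_S_b (s : Fin k) :
    (bigGraph V G k i a b N IS).Adj (Sum.inr (Sum.inl s)) (Sum.inl ⟨i, b⟩) := by
  rw [bigGraph, SimpleGraph.fromRel_adj]
  exact ⟨by simp, Or.inl (Or.inr (Or.inr (Or.inr (Or.inl ⟨s, rfl, Or.inr rfl⟩))))⟩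

lemma adj_S_j {j : Fin t} (hj : j ∈ IS) (s : Fin k) (u : V j) :
    (bigGraph V G k i a b N IS).Adj (Sum.inr (Sum.inl s)) (Sum.inl ⟨j, u⟩) := by
  rw [bigGraph, SimpleGraph.fromRel_adj]
  exact ⟨by simp, Or.inl (Or.inr (Or.inr (Or.inr (Or.inr (Or.inl ⟨s, j, u, hj, rfl, rfl⟩)))))⟩

lemma adj_T_u {u : V i} (ha : u ≠ a) (hb : u ≠ b) (s : Fin k) :
    (bigGraph V G k i a b N IS).Adj (Sum.inr (Sum.inr (Sum.inl s))) (Sum.inl ⟨i, u⟩) := by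
  rw [bigGraph, SimpleGraph.fromRel_adj]
  exact ⟨by simp, Or.inl (Or.inr (Or.inr (Or.inr (Or.inr (Or.inr (Or.inl ⟨s, u, ha, hb, rfl, rfl⟩))))))⟩

lemma adj_T_j {j : Fin t} (hj : j ≠ i) (hj' : j ∉ IS) (s : Fin k) (u : V j) :
    (bigGraph V G k i a b N IS).Adj (Sum.inr (Sum.inr (Sum.inl s))) (Sum.inl ⟨j, u⟩) := by
  rw [bigGraph, SimpleGraph.fromRel_adj]
  exact ⟨by simp, Or.inl (Or.inr (Or.inr (Or.inr (Or.inr (Or.inr (Or.inr (Or.inl ⟨s, j, u, hj, hj', rfl, rfl⟩)))))))⟩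

lemma adj_c {u : V i} (hu : u ∈ N) :
    (bigGraph V G k i a b N IS).Adj (Sum.inr (Sum.inr (Sum.inr ()))) (Sum.inl ⟨i, u⟩) := by
  rw [bigGraph, SimpleGraph.fromRel_adj]
  exact ⟨by simp, Or.inl (Or.inr (Or.inr (Or.inr (Or.inr (Or.inr (Or.inr (Or.inr ⟨u, hu, rfl, rfl⟩)))))))⟩

end BigHelpers
lemma mem_cutEdges' {V : Type*} {G : SimpleGraph V} {A : Set V} {u v : V}
    (h : G.Adj u v) (hu : u ∈ A) (hv : v ∉ A) : s(u, v) ∈ cutEdges G A :=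
  ⟨G.mem_edgeSet.2 h, u, v, hu, hv, rfl⟩

section CC
variable {t k : ℕ} {V : Fin t → Type*} {G : ∀ j, SimpleGraph (V j)}
  {i : Fin t} {a b : V i} {N : Set (V i)} {IS : Set (Fin t)}

lemma cutEdges_c :
    cutEdges (bigGraph V G k i a b N IS)
      {(Sum.inr (Sum.inr (Sum.inr ())) : (Σ j, V j) ⊕ (Fin k ⊕ (Fin k ⊕ Unit)))} =
    (fun u : V i => s((Sum.inr (Sum.inr (Sum.inr ())) : (Σ j, V j) ⊕ (Fin k ⊕ (Fin k ⊕ Unit))),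
        Sum.inl ⟨i, u⟩)) '' N := by
  ext e
  constructor
  · rintro ⟨he, x, y, hx, hy, rfl⟩
    rw [Set.mem_singleton_iff] at hx
    subst hx
    rw [SimpleGraph.mem_edgeSet, bigGraph, SimpleGraph.fromRel_adj] at he
    obtain ⟨hne, h | h⟩ := he
    · rcases h with ⟨j, u, v, huv, hx', hy'⟩ | ⟨s, s', hx', hy'⟩ | ⟨s, s', hx', hy'⟩ |
        ⟨s, hx', hy'⟩ | ⟨s, j, u, hj, hx', hy'⟩ | ⟨s, u, hua, hub, hx', hy'⟩ |
        ⟨s, j, u, hji, hjIS, hx', hy'⟩ | ⟨u, hu, hx', hy'⟩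
      · simp at hx'
      · simp at hx'
      · simp at hx'
      · simp at hx'
      · simp at hx'
      · simp at hx'
      · simp at hx'
      · exact ⟨u, hu, by rw [hy']⟩
    · rcases h with ⟨j, u, v, huv, hx', hy'⟩ | ⟨s, s', hx', hy'⟩ | ⟨s, s', hx', hy'⟩ |
        ⟨s, hx', hy'⟩ | ⟨s, j, u, hj, hx', hy'⟩ | ⟨s, u, hua, hub, hx', hy'⟩ |
        ⟨s, j, u, hji, hjIS, hx', hy'⟩ | ⟨u, hu, hx', hy'⟩
      · simp at hy'
      · simp at hy'
      · simp at hy'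
      · rcases hy' with hy' | hy' <;> simp at hy'
      · simp at hy'
      · simp at hy'
      · simp at hy'
      · simp at hy'
  · rintro ⟨u, hu, rfl⟩
    exact mem_cutEdges' (adj_c hu) rfl (by simp)
end CC
section CB
variable {t k : ℕ} {V : Fin t → Type*} {G : ∀ j, SimpleGraph (V j)}
  {i : Fin t} {a b : V i} {N : Set (V i)} {IS : Set (Fin t)}

lemma cutEdges_bigA (hIS : i ∉ IS) (hN : N ⊆ ({a, b}ᶜ : Set (V i))) :
    cutEdges (bigGraph V G k i a b N IS) (bigA V k i a b IS) =
    (fun u : V i => s((Sum.inl ⟨i, a⟩ : (Σ j, V j) ⊕ (Fin k ⊕ (Fin k ⊕ Unit))), Sum.inl ⟨i, u⟩))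
        '' ((G i).neighborSet a \ {b}) ∪
    (fun u : V i => s((Sum.inl ⟨i, b⟩ : (Σ j, V j) ⊕ (Fin k ⊕ (Fin k ⊕ Unit))), Sum.inl ⟨i, u⟩))
        '' ((G i).neighborSet b \ {a}) := by
  ext e
  constructor
  · rintro ⟨he, x, y, hx, hy, rfl⟩
    rw [SimpleGraph.mem_edgeSet, bigGraph, SimpleGraph.fromRel_adj] at he
    obtain ⟨hne, h | h⟩ := he
    · rcases h with ⟨j, u, v, huv, rfl, rfl⟩ | ⟨s, s', rfl, rfl⟩ | ⟨s, s', rfl, rfl⟩ |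
        ⟨s, rfl, hy'⟩ | ⟨s, j, u, hj, rfl, rfl⟩ | ⟨s, u, hua, hub, rfl, rfl⟩ |
        ⟨s, j, u, hji, hjIS, rfl, rfl⟩ | ⟨u, hu, rfl, rfl⟩
      · by_cases hji : j = i
        · subst hji
          rw [mem_bigA_Gi hIS] at hx
          rw [mem_bigA_Gi hIS] at hy
          push_neg at hy
          rcases hx with rfl | rfl
          · exact Or.inl ⟨v, ⟨huv, hy.2⟩, rfl⟩
          · exact Or.inr ⟨v, ⟨huv, hy.1⟩, rfl⟩
        · rw [mem_bigA_Gj hji] at hx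
          rw [mem_bigA_Gj hji] at hy
          exact absurd hx hy
      · exact absurd (mem_bigA_S s') hy
      · exact absurd hx (not_mem_bigA_T s)
      · rcases hy' with rfl | rfl
        · exact absurd ((mem_bigA_Gi hIS a).2 (Or.inl rfl)) hy
        · exact absurd ((mem_bigA_Gi hIS b).2 (Or.inr rfl)) hy
      · have hji : j ≠ i := fun h => hIS (h ▸ hj)
        exact absurd ((mem_bigA_Gj hji u).2 hj) hy
      · exact absurd hx (not_mem_bigA_T s)
      · exact absurd hx (not_mem_bigA_T s)
      · exact absurd hx not_mem_bigA_c
    · rcases h with ⟨j, u, v, huv, rfl, rfl⟩ | ⟨s, s', rfl, rfl⟩ | ⟨s, s', rfl, rfl⟩ |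
        ⟨s, rfl, hy'⟩ | ⟨s, j, u, hj, rfl, rfl⟩ | ⟨s, u, hua, hub, rfl, rfl⟩ |
        ⟨s, j, u, hji, hjIS, rfl, rfl⟩ | ⟨u, hu, rfl, rfl⟩
      · by_cases hji : j = i
        · subst hji
          rw [mem_bigA_Gi hIS] at hx
          rw [mem_bigA_Gi hIS] at hy
          push_neg at hy
          rcases hx with rfl | rfl
          · exact Or.inl ⟨u, ⟨huv.symm, hy.2⟩, rfl⟩
          · exact Or.inr ⟨u, ⟨huv.symm, hy.1⟩, rfl⟩
        · rw [mem_bigA_Gj hji] at hx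
          rw [mem_bigA_Gj hji] at hy
          exact absurd hx hy
      · exact absurd (mem_bigA_S s) hy
      · exact absurd hx (not_mem_bigA_T s')
      · exact absurd (mem_bigA_S s) hy
      · exact absurd (mem_bigA_S s) hy
      · rw [mem_bigA_Gi hIS] at hx
        rcases hx with h | h
        · exact absurd h hua
        · exact absurd h hub
      · rw [mem_bigA_Gj hji] at hx
        exact absurd hx hjIS
      · rw [mem_bigA_Gi hIS] at hx
        have := hN hu
        simp only [Set.mem_compl_iff, Set.mem_insert_iff, Set.mem_singleton_iff] at this
        push_neg at this
        rcases hx with rfl | rfl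
        · exact absurd rfl this.1
        · exact absurd rfl this.2
  · rintro (⟨u, ⟨hu, hub⟩, rfl⟩ | ⟨u, ⟨hu, hua⟩, rfl⟩)
    · refine mem_cutEdges' (adj_G hu) ((mem_bigA_Gi hIS a).2 (Or.inl rfl)) ?_
      rw [mem_bigA_Gi hIS]
      push_neg
      exact ⟨fun h => (G i).irrefl (h ▸ hu), hub⟩
    · refine mem_cutEdges' (adj_G hu) ((mem_bigA_Gi hIS b).2 (Or.inr rfl)) ?_
      rw [mem_bigA_Gi hIS]
      push_neg
      exact ⟨hua, fun h => (G i).irrefl (h ▸ hu)⟩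
end CB
section NC
variable {t k : ℕ} {V : Fin t → Type*} [∀ j, Fintype (V j)] {G : ∀ j, SimpleGraph (V j)}
  {i : Fin t} {a b : V i} {N : Set (V i)} {IS : Set (Fin t)}

lemma ncard_Eab (hab : a ≠ b) :
    ((fun u : V i => s((Sum.inl ⟨i, a⟩ : (Σ j, V j) ⊕ (Fin k ⊕ (Fin k ⊕ Unit))), Sum.inl ⟨i, u⟩))
        '' ((G i).neighborSet a \ {b}) ∪
     (fun u : V i => s((Sum.inl ⟨i, b⟩ : (Σ j, V j) ⊕ (Fin k ⊕ (Fin k ⊕ Unit))), Sum.inl ⟨i, u⟩))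
        '' ((G i).neighborSet b \ {a})).ncard =
    ((G i).neighborSet a \ {b}).ncard + ((G i).neighborSet b \ {a}).ncard := by
  have hinj : ∀ w : V i, Function.Injective
      (fun u : V i => s((Sum.inl ⟨i, w⟩ : (Σ j, V j) ⊕ (Fin k ⊕ (Fin k ⊕ Unit))), Sum.inl ⟨i, u⟩)) := by
    intro w u u' h
    simp only [Sym2.eq_iff, Sum.inl.injEq, Sigma.mk.inj_iff, heq_eq_eq, true_and] at h
    rcases h with h | ⟨h1, h2⟩
    · exact h
    · exact h2.trans h1
  rw [Set.ncard_union_eq, Set.ncard_image_of_injective _ (hinj a),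
    Set.ncard_image_of_injective _ (hinj b)]
  rw [Set.disjoint_left]
  rintro e ⟨u, ⟨hu, hub⟩, rfl⟩ ⟨u', ⟨hu', hua⟩, he⟩
  simp only [Sym2.eq_iff, Sum.inl.injEq, Sigma.mk.inj_iff, heq_eq_eq, true_and] at he
  simp only [Set.mem_singleton_iff] at hua hub
  rcases he with ⟨h1, -⟩ | ⟨-, h2⟩
  · exact hab h1.symm
  · exact hua h2
end NC
section LB
variable {t k : ℕ} {V : Fin t → Type*} [∀ j, Fintype (V j)] {G : ∀ j, SimpleGraph (V j)}
  {i : Fin t} {a b : V i} {N : Set (V i)} {IS : Set (Fin t)}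

lemma lb_core (hab : a ≠ b) (hIS : i ∉ IS)
    {d : ℕ} (hd : d = ((G i).neighborSet a).ncard + ((G i).neighborSet b).ncard)
    (hkd : d + 1 ≤ k) (hNcard : N.ncard = d - 1)
    (A : Set ((Σ j, V j) ⊕ (Fin k ⊕ (Fin k ⊕ Unit))))
    (hS : ∀ s : Fin k, Sum.inr (Sum.inl s) ∈ A)
    (hT : (∀ s : Fin k, Sum.inr (Sum.inr (Sum.inl s)) ∈ A) ∨
          (∀ s : Fin k, Sum.inr (Sum.inr (Sum.inl s)) ∉ A))
    (hA2 : Aᶜ.Nonempty) :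
    (if (G i).Adj a b then d - 2 else d - 1) ≤
      (cutEdges (bigGraph V G k i a b N IS) A).ncard := by
  have hvSinj : Function.Injective
      (fun s : Fin k => (Sum.inr (Sum.inl s) : (Σ j, V j) ⊕ (Fin k ⊕ (Fin k ⊕ Unit)))) := by
    intro x y h; simpa using h
  have hvTinj : Function.Injective
      (fun s : Fin k => (Sum.inr (Sum.inr (Sum.inl s)) : (Σ j, V j) ⊕ (Fin k ⊕ (Fin k ⊕ Unit)))) := by
    intro x y h; simpa using h
  have hmd : (if (G i).Adj a b then d - 2 else d - 1) ≤ d - 1 := by split <;> omega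
  have hmk : (if (G i).Adj a b then d - 2 else d - 1) ≤ k := by split <;> omega
  rcases hT with hT | hT
  · by_cases hmis : ∃ p : Σ j, V j, Sum.inl p ∉ A
    · obtain ⟨⟨j, u⟩, hp⟩ := hmis
      have hstar : ∃ f : Fin k → ((Σ j, V j) ⊕ (Fin k ⊕ (Fin k ⊕ Unit))), Function.Injective f ∧
          (∀ s, (bigGraph V G k i a b N IS).Adj (Sum.inl ⟨j, u⟩) (f s)) ∧ (∀ s, f s ∈ A) := by
        by_cases hji : j = i
        · subst hji
          by_cases hua : u = a
          · subst hua; exact ⟨_, hvSinj, fun s => (adj_S_a s).symm, hS⟩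
          · by_cases hub : u = b
            · subst hub; exact ⟨_, hvSinj, fun s => (adj_S_b s).symm, hS⟩
            · exact ⟨_, hvTinj, fun s => (adj_T_u hua hub s).symm, hT⟩
        · by_cases hjIS : j ∈ IS
          · exact ⟨_, hvSinj, fun s => (adj_S_j hjIS s u).symm, hS⟩
          · exact ⟨_, hvTinj, fun s => (adj_T_j hji hjIS s u).symm, hT⟩
      obtain ⟨f, hfinj, hfadj, hfA⟩ := hstar
      calc (if (G i).Adj a b then d - 2 else d - 1) ≤ k := hmk
        _ ≤ _ := star_cut_lb' _ A f hfinj _ hfadj hp hfA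
    · push_neg at hmis
      obtain ⟨x, hx⟩ := hA2
      have hxc : x = Sum.inr (Sum.inr (Sum.inr ())) := by
        rcases x with p | (s | (s | u))
        · exact absurd (hmis p) hx
        · exact absurd (hS s) hx
        · exact absurd (hT s) hx
        · rfl
      subst hxc
      have hsub : (fun u : V i => s((Sum.inl ⟨i, u⟩ : (Σ j, V j) ⊕ (Fin k ⊕ (Fin k ⊕ Unit))),
          Sum.inr (Sum.inr (Sum.inr ())))) '' N ⊆ cutEdges (bigGraph V G k i a b N IS) A := by
        rintro e ⟨u, hu, rfl⟩
        exact mem_cutEdges' (adj_c hu).symm (hmis _) hx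
      have hle := Set.ncard_le_ncard hsub (Set.toFinite _)
      have hinj : Function.Injective (fun u : V i =>
          s((Sum.inl ⟨i, u⟩ : (Σ j, V j) ⊕ (Fin k ⊕ (Fin k ⊕ Unit))),
            Sum.inr (Sum.inr (Sum.inr ())))) := by
        intro x y h; simpa using h
      rw [Set.ncard_image_of_injective _ hinj] at hle
      calc (if (G i).Adj a b then d - 2 else d - 1) ≤ d - 1 := hmd
        _ = N.ncard := hNcard.symm
        _ ≤ _ := hle
  · by_cases ha' : Sum.inl ⟨i, a⟩ ∈ A
    · by_cases hb' : Sum.inl ⟨i, b⟩ ∈ A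
      · by_cases hu' : ∃ u : V i, u ≠ a ∧ u ≠ b ∧ Sum.inl ⟨i, u⟩ ∈ A
        · obtain ⟨u, hua, hub, hu⟩ := hu'
          calc (if (G i).Adj a b then d - 2 else d - 1) ≤ k := hmk
            _ ≤ _ := star_cut_lb _ A _ hvTinj _ (fun s => (adj_T_u hua hub s).symm) hu hT
        · by_cases hjS : ∃ (j : Fin t) (u : V j), j ∈ IS ∧ Sum.inl ⟨j, u⟩ ∉ A
          · obtain ⟨j, u, hj, hju⟩ := hjS
            calc (if (G i).Adj a b then d - 2 else d - 1) ≤ k := hmk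
              _ ≤ _ := star_cut_lb' _ A _ hvSinj _ (fun s => (adj_S_j hj s u).symm) hju hS
          · by_cases hjT : ∃ (j : Fin t) (u : V j), j ≠ i ∧ j ∉ IS ∧ Sum.inl ⟨j, u⟩ ∈ A
            · obtain ⟨j, u, h1, h2, hju⟩ := hjT
              calc (if (G i).Adj a b then d - 2 else d - 1) ≤ k := hmk
                _ ≤ _ := star_cut_lb _ A _ hvTinj _ (fun s => (adj_T_j h1 h2 s u).symm) hju hT
            · push_neg at hu' hjS hjT
              have hsub : ((fun u : V i =>
                  s((Sum.inl ⟨i, a⟩ : (Σ j, V j) ⊕ (Fin k ⊕ (Fin k ⊕ Unit))), Sum.inl ⟨i, u⟩))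
                    '' ((G i).neighborSet a \ {b}) ∪
                  (fun u : V i =>
                  s((Sum.inl ⟨i, b⟩ : (Σ j, V j) ⊕ (Fin k ⊕ (Fin k ⊕ Unit))), Sum.inl ⟨i, u⟩))
                    '' ((G i).neighborSet b \ {a})) ⊆
                  cutEdges (bigGraph V G k i a b N IS) A := by
                rintro e (⟨u, ⟨hu, hub⟩, rfl⟩ | ⟨u, ⟨hu, hua⟩, rfl⟩)
                · refine mem_cutEdges' (adj_G hu) ha' ?_
                  exact hu' u (fun h => (G i).irrefl (h ▸ hu)) (fun h => hub (by simp [h]))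
                · refine mem_cutEdges' (adj_G hu) hb' ?_
                  exact hu' u (fun h => hua (by simp [h])) (fun h => (G i).irrefl (h ▸ hu))
              have hle := Set.ncard_le_ncard hsub (Set.toFinite _)
              rw [ncard_Eab hab] at hle
              by_cases hadj : (G i).Adj a b
              · rw [if_pos hadj]
                have hbmem : b ∈ (G i).neighborSet a := hadj
                have hamem : a ∈ (G i).neighborSet b := hadj.symm
                have h1 := Set.ncard_diff_singleton_add_one hbmem (Set.toFinite _)
                have h2 := Set.ncard_diff_singleton_add_one hamem (Set.toFinite _)
                omega
              · rw [if_neg hadj]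
                have hbn : b ∉ (G i).neighborSet a := fun h => hadj h
                have han : a ∉ (G i).neighborSet b := fun h => hadj h.symm
                rw [Set.diff_singleton_eq_self hbn, Set.diff_singleton_eq_self han] at hle
                omega
      · calc (if (G i).Adj a b then d - 2 else d - 1) ≤ k := hmk
          _ ≤ _ := star_cut_lb' _ A _ hvSinj _ (fun s => (adj_S_b s).symm) hb' hS
    · calc (if (G i).Adj a b then d - 2 else d - 1) ≤ k := hmk
        _ ≤ _ := star_cut_lb' _ A _ hvSinj _ (fun s => (adj_S_a s).symm) ha' hS
end LB
/-- With `d = deg_{G i}(a) + deg_{G i}(b) ≥ 1`, `k ≥ d + 1`,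
`|V i ∖ {a,b}| ≥ d − 1`, `N ⊆ V i ∖ {a,b}` of size `d − 1`, and `(IS, its complement)`
partitioning the indices `≠ i`, the minimum cut value of the graph `H⁺` equals
`d − 2` if `{a, b}` is an edge of `G i` and `d − 1` otherwise. -/
theorem stmt6 (k t : ℕ) (hk : 0 < k) (ht : 0 < t)
    (V : Fin t → Type*) [∀ j, Fintype (V j)]
    (G : ∀ j, SimpleGraph (V j))
    (i : Fin t) (a b : V i) (hab : a ≠ b)
    (d : ℕ)
    (hd : d = ((G i).neighborSet a).ncard + ((G i).neighborSet b).ncard)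
    (hd1 : 1 ≤ d) (hkd : d + 1 ≤ k)
    (hVi : d - 1 ≤ (({a, b}ᶜ : Set (V i))).ncard)
    (N : Set (V i)) (hN : N ⊆ ({a, b}ᶜ : Set (V i))) (hNcard : N.ncard = d - 1)
    (IS : Set (Fin t)) (hIS : i ∉ IS) :
    IsLeast {m : ℕ | ∃ A : Set ((Σ j, V j) ⊕ (Fin k ⊕ (Fin k ⊕ Unit))),
        A.Nonempty ∧ Aᶜ.Nonempty ∧ m = (cutEdges (bigGraph V G k i a b N IS) A).ncard}
      (if (G i).Adj a b then d - 2 else d - 1) := by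
  constructor
  · -- the minimum is attained
    by_cases hadj : (G i).Adj a b
    · rw [if_pos hadj]
      refine ⟨bigA V k i a b IS, ⟨Sum.inr (Sum.inl ⟨0, hk⟩), mem_bigA_S _⟩,
        ⟨Sum.inr (Sum.inr (Sum.inr ())), not_mem_bigA_c⟩, ?_⟩
      rw [cutEdges_bigA hIS hN, ncard_Eab hab]
      have hbmem : b ∈ (G i).neighborSet a := hadj
      have hamem : a ∈ (G i).neighborSet b := hadj.symm
      have h1 := Set.ncard_diff_singleton_add_one hbmem (Set.toFinite _)
      have h2 := Set.ncard_diff_singleton_add_one hamem (Set.toFinite _)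
      omega
    · rw [if_neg hadj]
      refine ⟨{Sum.inr (Sum.inr (Sum.inr ()))}, ⟨Sum.inr (Sum.inr (Sum.inr ())), rfl⟩,
        ⟨Sum.inr (Sum.inl ⟨0, hk⟩), by simp⟩, ?_⟩
      have hinj : Function.Injective (fun u : V i =>
          s((Sum.inr (Sum.inr (Sum.inr ())) : (Σ j, V j) ⊕ (Fin k ⊕ (Fin k ⊕ Unit))),
            Sum.inl ⟨i, u⟩)) := by
        intro x y h; simpa using h
      rw [cutEdges_c, Set.ncard_image_of_injective _ hinj, hNcard]
  · -- lower bound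
    rintro m ⟨A, hA1, hA2, rfl⟩
    have hvSinj : Function.Injective
        (fun s : Fin k => (Sum.inr (Sum.inl s) : (Σ j, V j) ⊕ (Fin k ⊕ (Fin k ⊕ Unit)))) := by
      intro x y h; simpa using h
    have hvTinj : Function.Injective
        (fun s : Fin k => (Sum.inr (Sum.inr (Sum.inl s)) : (Σ j, V j) ⊕ (Fin k ⊕ (Fin k ⊕ Unit)))) := by
      intro x y h; simpa using h
    have hmk1 : (if (G i).Adj a b then d - 2 else d - 1) ≤ k - 1 := by split <;> omega
    by_cases hSsp : (∃ s : Fin k, Sum.inr (Sum.inl s) ∈ A) ∧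
        (∃ s : Fin k, (Sum.inr (Sum.inl s) : (Σ j, V j) ⊕ (Fin k ⊕ (Fin k ⊕ Unit))) ∉ A)
    · obtain ⟨⟨s₀, h0⟩, ⟨s₁, h1⟩⟩ := hSsp
      exact le_trans hmk1 (clique_cut_lb (bigGraph V G k i a b N IS) A _ hvSinj
        (fun s s' h => adj_S_S h) h0 h1)
    · by_cases hTsp : (∃ s : Fin k, Sum.inr (Sum.inr (Sum.inl s)) ∈ A) ∧
          (∃ s : Fin k, (Sum.inr (Sum.inr (Sum.inl s)) : (Σ j, V j) ⊕ (Fin k ⊕ (Fin k ⊕ Unit))) ∉ A)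
      · obtain ⟨⟨s₀, h0⟩, ⟨s₁, h1⟩⟩ := hTsp
        exact le_trans hmk1 (clique_cut_lb (bigGraph V G k i a b N IS) A _ hvTinj
          (fun s s' h => adj_T_T h) h0 h1)
      · have hS : (∀ s : Fin k, Sum.inr (Sum.inl s) ∈ A) ∨
            (∀ s : Fin k, (Sum.inr (Sum.inl s) : (Σ j, V j) ⊕ (Fin k ⊕ (Fin k ⊕ Unit))) ∉ A) := by
          rcases not_and_or.mp hSsp with h | h
          · push_neg at h; right; exact h
          · push_neg at h; left; exact h
        have hT : (∀ s : Fin k, Sum.inr (Sum.inr (Sum.inl s)) ∈ A) ∨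
            (∀ s : Fin k, (Sum.inr (Sum.inr (Sum.inl s)) : (Σ j, V j) ⊕ (Fin k ⊕ (Fin k ⊕ Unit))) ∉ A) := by
          rcases not_and_or.mp hTsp with h | h
          · push_neg at h; right; exact h
          · push_neg at h; left; exact h
        rcases hS with hS | hS
        · exact lb_core hab hIS hd hkd hNcard A hS hT hA2
        · rw [← cutEdges_compl]
          refine lb_core hab hIS hd hkd hNcard Aᶜ (fun s => hS s) ?_ ?_
          · rcases hT with h | h
            · exact Or.inr (fun s => by simpa using h s)
            · exact Or.inl (fun s => h s)
          · simpa using hA1
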